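/- Haemers bound under tensor powers: Let G be a finite graph, F a field, and A a V(G) × V(G) matrix over F with A(x,x) ≠ 0 for every vertex x and A(x,y) = 0 for every pair of distinct non-adjacent vertices. Then for every n ≥ 1, α(G^{⊠n}) ≤ rank(A)^n, where G^{⊠n} is the n-fold strong graph power. -/

import Mathlib

/-- The `k`-fold strong graph power of `G`. -/
def strongPow {V : Type*} (G : SimpleGraph V) (k : ℕ) : SimpleGraph (Fin k → V) where
  Adj x y := x ≠ y ∧ ∀ i, x i = y i ∨ G.Adj (x i) (y i)
  symm := ⟨by
    rintro x y ⟨hne, h⟩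
    exact ⟨fun he => hne he.symm, fun i => (h i).imp Eq.symm (G.adj_symm ·)⟩⟩
  loopless := ⟨fun x h => h.1 rfl⟩

/-- Rank factorization: a square matrix of rank `r` factors through `Fin r`. -/
lemma rank_factorization_aux13 {m : Type*} [Fintype m] [DecidableEq m] {F : Type*} [Field F]
    (A : Matrix m m F) :
    ∃ (C : Matrix m (Fin A.rank) F) (D : Matrix (Fin A.rank) m F), A = C * D := by
  classical
  set W := LinearMap.range A.mulVecLin with hW
  have hcol : ∀ j, (fun x => A x j) ∈ W := by
    intro j
    refine ⟨Pi.single j 1, ?_⟩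
    ext x
    simp [Matrix.mulVecLin, Matrix.mulVec, dotProduct, Pi.single_apply]
  let b : Module.Basis (Fin A.rank) F W := Module.finBasis F W
  refine ⟨fun x i => (b i : m → F) x, fun i j => b.repr ⟨_, hcol j⟩ i, ?_⟩
  ext x j
  have := b.sum_repr ⟨fun x => A x j, hcol j⟩
  have h2 := congrArg (fun (w : W) => (w : m → F) x) this
  simp only [Submodule.coe_sum, SetLike.val_smul, Finset.sum_apply, Pi.smul_apply,
    smul_eq_mul] at h2
  show A x j = ∑ i, (b i : m → F) x * b.repr ⟨_, hcol j⟩ i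
  rw [← h2]
  exact Finset.sum_congr rfl fun i _ => mul_comm _ _

theorem stmt_13 {V : Type*} [Fintype V] [DecidableEq V] (G : SimpleGraph V)
    {F : Type*} [Field F] (A : Matrix V V F)
    (hdiag : ∀ x, A x x ≠ 0)
    (hoff : ∀ x y, x ≠ y → ¬G.Adj x y → A x y = 0)
    (k : ℕ) (hk : 1 ≤ k)
    (s : Finset (Fin k → V))
    (hs : ∀ x ∈ s, ∀ y ∈ s, x ≠ y → ¬(strongPow G k).Adj x y) :
    s.card ≤ A.rank ^ k := by
  classical
  set B : Matrix (Fin k → V) (Fin k → V) F :=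
    Matrix.of fun x y => ∏ i, A (x i) (y i) with hB
  -- off-diagonal entries of `B` on `s` vanish
  have hBoff : ∀ x ∈ s, ∀ y ∈ s, x ≠ y → B x y = 0 := by
    intro x hx y hy hxy
    have hnadj := hs x hx y hy hxy
    simp only [strongPow, ne_eq, not_and, not_forall] at hnadj
    obtain ⟨i, hi⟩ := hnadj hxy
    push_neg at hi
    exact Finset.prod_eq_zero (Finset.mem_univ i) (hoff _ _ hi.1 hi.2)
  have hBdiag : ∀ x : Fin k → V, B x x ≠ 0 := by
    intro x
    show (∏ i, A (x i) (x i)) ≠ 0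
    exact Finset.prod_ne_zero_iff.2 fun i _ => hdiag (x i)
  -- rank bound for `B` via rank factorization of `A`
  have hrankB : B.rank ≤ A.rank ^ k := by
    obtain ⟨C, D, hA⟩ := rank_factorization_aux13 A
    have hfac : B = (Matrix.of fun (x : Fin k → V) (f : Fin k → Fin A.rank) =>
        ∏ i, C (x i) (f i)) * (Matrix.of fun (f : Fin k → Fin A.rank) (y : Fin k → V) =>
        ∏ i, D (f i) (y i)) := by
      ext x y
      simp only [hB, Matrix.mul_apply, Matrix.of_apply, hA]
      rw [Finset.prod_univ_sum, Fintype.piFinset_univ]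
      exact Finset.sum_congr rfl fun f _ => Finset.prod_mul_distrib
    calc B.rank ≤ _ := hfac ▸ Matrix.rank_mul_le _ _
      _ ≤ A.rank ^ k := by
        refine min_le_of_left_le ?_
        simpa using (Matrix.rank_le_card_width (R := F)
          (Matrix.of fun (x : Fin k → V) (f : Fin k → Fin A.rank) => ∏ i, C (x i) (f i)))
  -- the columns of `B` indexed by `s` are linearly independent, and lie in the
  -- column space of `B`, whose dimension is `B.rank`.
  set W := LinearMap.range B.mulVecLin with hW
  have hcol : ∀ y : Fin k → V, (fun x => B x y) ∈ W := by
    intro y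
    refine ⟨Pi.single y 1, ?_⟩
    ext x
    simp [Matrix.mulVecLin, Matrix.mulVec, dotProduct, Pi.single_apply]
  set v : s → W := fun y => ⟨fun x => B x y, hcol y⟩ with hv
  have hli : LinearIndependent F v := by
    have hli' : LinearIndependent F fun (y : s) (x : Fin k → V) => B x (y : Fin k → V) := by
      rw [Fintype.linearIndependent_iff]
      intro g hg y
      have hgy := congrFun hg (y : Fin k → V)
      simp only [Finset.sum_apply, Pi.smul_apply, smul_eq_mul, Pi.zero_apply] at hgy
      rw [Finset.sum_eq_single y] at hgy
      · exact (mul_eq_zero.1 hgy).resolve_right (hBdiag _)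
      · intro z _ hzy
        have : B (y : Fin k → V) (z : Fin k → V) = 0 :=
          hBoff _ y.2 _ z.2 (fun h => hzy (Subtype.ext h.symm))
        rw [this, mul_zero]
      · intro h
        exact absurd (Finset.mem_univ y) h
    exact hli'.of_comp W.subtype
  have hcard : Fintype.card s ≤ Module.finrank F W :=
    hli.fintype_card_le_finrank
  calc s.card = Fintype.card s := (Fintype.card_coe s).symm
    _ ≤ Module.finrank F W := hcard
    _ = B.rank := rfl
    _ ≤ A.rank ^ k := hrankB
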